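/- arXiv:1801.00070 — 5 statements merged into one kernel-verified Lean document; each statement's English description precedes it below -/
import Mathlib

section
/- There exists a positive definite homogeneous polynomial V in three variables that is not a sum of squares; for example V(x₁,x₂,x₃) = x₁⁴x₂² + x₁²x₂⁴ − 3x₁²x₂²x₃² + x₃⁶ + (1/250)(x₁² + x₂² + x₃²)³ is positive definite but not a sum of squares of polynomials. -/
open MvPolynomial

/-- A polynomial is a sum of squares if it is a finite sum of squares of polynomials. -/
def IsSOS {n : ℕ} (p : MvPolynomial (Fin n) ℝ) : Prop :=
  ∃ (m : ℕ) (q : Fin m → MvPolynomial (Fin n) ℝ), p = ∑ i, (q i) ^ 2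

private noncomputable def emb3 (t : ℕ × ℕ × ℕ) : Fin 3 →₀ ℕ :=
  Finsupp.single 0 t.1 + Finsupp.single 1 t.2.1 + Finsupp.single 2 t.2.2

private lemma emb3_inj : Function.Injective emb3 := by
  intro s t h
  have h0 := DFunLike.congr_fun h 0
  have h1 := DFunLike.congr_fun h 1
  have h2 := DFunLike.congr_fun h 2
  simp [emb3, Finsupp.single_apply] at h0 h1 h2
  exact Prod.ext h0 (Prod.ext h1 h2)

private lemma finsupp_fin3_eq (μ : Fin 3 →₀ ℕ) : μ = emb3 (μ 0, μ 1, μ 2) := by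
  ext i
  fin_cases i <;> simp [emb3, Finsupp.single_apply]

private lemma degree_fin3 (μ : Fin 3 →₀ ℕ) : μ.degree = μ 0 + μ 1 + μ 2 := by
  have : μ.degree = ∑ i : Fin 3, μ i := by
    rw [Finsupp.degree]
    exact Finset.sum_subset (Finset.subset_univ _)
      (fun i _ hi => Finsupp.notMem_support_iff.mp hi)
  rw [this, Fin.sum_univ_three]

private lemma monomial_emb3 (t : ℕ × ℕ × ℕ) (c : ℝ) :
    (monomial (emb3 t) c : MvPolynomial (Fin 3) ℝ)
      = C c * X 0 ^ t.1 * X 1 ^ t.2.1 * X 2 ^ t.2.2 := by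
  simp [emb3, X_pow_eq_monomial, monomial_mul, C_mul_monomial]

private def T10 : Finset (ℕ × ℕ × ℕ) :=
  {(3,0,0),(0,3,0),(0,0,3),(2,1,0),(1,2,0),(2,0,1),(0,2,1),(1,0,2),(0,1,2),(1,1,1)}

private lemma mem_T10 {a b c : ℕ} (h : a + b + c = 3) : (a,b,c) ∈ T10 := by
  have ha : a ≤ 3 := by omega
  have hb : b ≤ 3 := by omega
  have hc : c ≤ 3 := by omega
  interval_cases a <;> interval_cases b <;> interval_cases c <;> simp_all <;> decide

/-- every homogeneous cubic in three variables is an explicit combination of the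
10 monomials of degree 3 -/
private lemma rep3 (p : MvPolynomial (Fin 3) ℝ) (hp : p.IsHomogeneous 3) :
    ∃ a b c d e f g h k j : ℝ, p =
      C a * X 0 ^ 3 + C b * X 1 ^ 3 + C c * X 2 ^ 3 + C d * X 0 ^ 2 * X 1
      + C e * X 0 * X 1 ^ 2 + C f * X 0 ^ 2 * X 2 + C g * X 1 ^ 2 * X 2
      + C h * X 0 * X 2 ^ 2 + C k * X 1 * X 2 ^ 2 + C j * X 0 * X 1 * X 2 := by
  have hsub : p.support ⊆ T10.image emb3 := by
    intro μ hμ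
    have hd : μ.degree = 3 := by
      by_contra h
      exact (MvPolynomial.mem_support_iff.mp hμ) (hp.coeff_eq_zero h)
    rw [degree_fin3] at hd
    exact Finset.mem_image.mpr ⟨(μ 0, μ 1, μ 2), mem_T10 hd, (finsupp_fin3_eq μ).symm⟩
  have hps : p = ∑ t ∈ T10, monomial (emb3 t) (coeff (emb3 t) p) := by
    calc p = ∑ v ∈ p.support, monomial v (coeff v p) := as_sum p
      _ = ∑ v ∈ T10.image emb3, monomial v (coeff v p) := by
          refine Finset.sum_subset hsub (fun x _ hx => ?_)
          rw [MvPolynomial.notMem_support_iff.mp hx, map_zero]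
      _ = ∑ t ∈ T10, monomial (emb3 t) (coeff (emb3 t) p) :=
          Finset.sum_image (fun x _ y _ h => emb3_inj h)
  refine ⟨coeff (emb3 (3,0,0)) p, coeff (emb3 (0,3,0)) p, coeff (emb3 (0,0,3)) p,
    coeff (emb3 (2,1,0)) p, coeff (emb3 (1,2,0)) p, coeff (emb3 (2,0,1)) p,
    coeff (emb3 (0,2,1)) p, coeff (emb3 (1,0,2)) p, coeff (emb3 (0,1,2)) p,
    coeff (emb3 (1,1,1)) p, ?_⟩
  conv_lhs => rw [hps]
  show Finset.sum _ (fun t => monomial (emb3 t) (coeff (emb3 t) p)) = _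
  rw [T10]
  rw [Finset.sum_insert (by decide), Finset.sum_insert (by decide),
    Finset.sum_insert (by decide), Finset.sum_insert (by decide),
    Finset.sum_insert (by decide), Finset.sum_insert (by decide),
    Finset.sum_insert (by decide), Finset.sum_insert (by decide),
    Finset.sum_insert (by decide), Finset.sum_singleton]
  simp only [monomial_emb3]
  ring

private lemma sq_sum_eq_zero {m : ℕ} (p : Fin m → MvPolynomial (Fin 3) ℝ)
    (h : ∑ i, (p i) ^ 2 = 0) (i : Fin m) : p i = 0 := by
  apply MvPolynomial.funext (q := 0)
  intro x
  have hx := congrArg (eval x) h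
  simp only [map_sum, map_pow, map_zero] at hx
  have := (Finset.sum_eq_zero_iff_of_nonneg (fun j _ => sq_nonneg (eval x (p j)))).mp hx
    i (Finset.mem_univ i)
  simpa using pow_eq_zero_iff (n := 2) (by norm_num) |>.mp this

private lemma hc_sq (p : MvPolynomial (Fin 3) ℝ) (d : ℕ)
    (hd : ∀ e, d < e → homogeneousComponent e p = 0) :
    homogeneousComponent (2*d) (p * p)
      = homogeneousComponent d p * homogeneousComponent d p := by
  by_cases htd : p.totalDegree < d
  · rw [homogeneousComponent_eq_zero _ _ htd, mul_zero]
    apply homogeneousComponent_eq_zero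
    calc (p*p).totalDegree ≤ p.totalDegree + p.totalDegree := totalDegree_mul p p
      _ < 2*d := by omega
  · push_neg at htd
    set n := p.totalDegree + 1 with hn
    have hdn : d ∈ Finset.range n := Finset.mem_range.mpr (by omega)
    have hp : p = ∑ e ∈ Finset.range n, homogeneousComponent e p :=
      (sum_homogeneousComponent p).symm
    calc homogeneousComponent (2*d) (p * p)
        = homogeneousComponent (2*d)
            ((∑ e1 ∈ Finset.range n, homogeneousComponent e1 p) *
             (∑ e2 ∈ Finset.range n, homogeneousComponent e2 p)) := by rw [← hp]
      _ = ∑ e1 ∈ Finset.range n, ∑ e2 ∈ Finset.range n,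
            homogeneousComponent (2*d)
              (homogeneousComponent e1 p * homogeneousComponent e2 p) := by
          rw [Finset.sum_mul_sum]
          rw [map_sum]
          exact Finset.sum_congr rfl (fun e1 _ => map_sum _ _ _)
      _ = ∑ e1 ∈ Finset.range n, ∑ e2 ∈ Finset.range n,
            (if e1 = d ∧ e2 = d then homogeneousComponent d p * homogeneousComponent d p
              else 0) := by
          refine Finset.sum_congr rfl (fun e1 _ => Finset.sum_congr rfl (fun e2 _ => ?_))
          rcases lt_or_ge d e1 with h1 | h1
          · rw [hd e1 h1, zero_mul, map_zero, if_neg (by omega)]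
          · rcases lt_or_ge d e2 with h2 | h2
            · rw [hd e2 h2, mul_zero, map_zero, if_neg (by omega)]
            · have hmem : homogeneousComponent e1 p * homogeneousComponent e2 p ∈
                  homogeneousSubmodule (Fin 3) ℝ (e1 + e2) :=
                mem_homogeneousSubmodule _ _ |>.mpr
                  ((homogeneousComponent_isHomogeneous e1 p).mul
                    (homogeneousComponent_isHomogeneous e2 p))
              rw [homogeneousComponent_of_mem hmem]
              by_cases he : e1 = d ∧ e2 = d
              · rw [if_pos he, if_pos (by omega), he.1, he.2]
              · rw [if_neg he, if_neg (by omega)]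
      _ = homogeneousComponent d p * homogeneousComponent d p := by
          rw [Finset.sum_eq_single_of_mem d hdn
              (fun e1 _ h => Finset.sum_eq_zero (fun e2 _ => if_neg (by tauto))),
            Finset.sum_eq_single_of_mem d hdn (fun e2 _ h => if_neg (by tauto)),
            if_pos ⟨rfl, rfl⟩]

private lemma reduction {m : ℕ} {V : MvPolynomial (Fin 3) ℝ} (hV : V.IsHomogeneous 6)
    (q : Fin m → MvPolynomial (Fin 3) ℝ) (hq : V = ∑ i, (q i) ^ 2) :
    V = ∑ i, (homogeneousComponent 3 (q i)) ^ 2 := by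
  set N := Finset.univ.sup (fun i => (q i).totalDegree) with hN
  have hVmem : V ∈ homogeneousSubmodule (Fin 3) ℝ 6 := (mem_homogeneousSubmodule _ _).mpr hV
  have descent : ∀ k d, N + 1 ≤ d + k → 4 ≤ d → ∀ i, homogeneousComponent d (q i) = 0 := by
    intro k
    induction k with
    | zero =>
      intro d hdk _ i
      exact homogeneousComponent_eq_zero _ _
        (lt_of_le_of_lt (Finset.le_sup (f := fun i => (q i).totalDegree)
          (Finset.mem_univ i)) (by omega))
    | succ k ih =>
      intro d hdk hd4 i
      have hgt : ∀ e, d < e → ∀ j, homogeneousComponent e (q j) = 0 :=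
        fun e he j => ih e (by omega) (by omega) j
      have h2d : homogeneousComponent (2*d) V = 0 := by
        rw [homogeneousComponent_of_mem hVmem, if_neg (by omega)]
      have hsum' : ∑ j, (homogeneousComponent d (q j))^2 = 0 := by
        rw [← h2d, hq, map_sum]
        refine Finset.sum_congr rfl (fun j _ => ?_)
        rw [sq, sq, hc_sq (q j) d (fun e he => hgt e he j)]
      exact sq_sum_eq_zero _ hsum' i
  have hd3 : ∀ i, ∀ e, 3 < e → homogeneousComponent e (q i) = 0 := by
    intro i e he
    exact descent (N + 1) e (by omega) (by omega) i
  calc V = homogeneousComponent 6 V := by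
        rw [homogeneousComponent_of_mem hVmem, if_pos rfl]
    _ = ∑ i, (homogeneousComponent 3 (q i)) ^ 2 := by
        rw [hq, map_sum]
        refine Finset.sum_congr rfl (fun j _ => ?_)
        rw [sq, sq, show (6:ℕ) = 2*3 from rfl, hc_sq (q j) 3 (hd3 j)]

set_option maxHeartbeats 2000000 in
/-- There is a positive definite homogeneous polynomial in three variables that is not a
sum of squares, e.g. `x₁⁴x₂² + x₁²x₂⁴ − 3x₁²x₂²x₃² + x₃⁶ + (1/250)(x₁²+x₂²+x₃²)³`. -/
theorem exists_posdef_homogeneous_not_sos :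
    ∃ V : MvPolynomial (Fin 3) ℝ,
      V = X 0 ^ 4 * X 1 ^ 2 + X 0 ^ 2 * X 1 ^ 4 - 3 * X 0 ^ 2 * X 1 ^ 2 * X 2 ^ 2
          + X 2 ^ 6 + C (1 / 250 : ℝ) * (X 0 ^ 2 + X 1 ^ 2 + X 2 ^ 2) ^ 3 ∧
      V.IsHomogeneous 6 ∧
      (∀ x : Fin 3 → ℝ, x ≠ 0 → 0 < eval x V) ∧
      ¬ IsSOS V := by
  have hhom : (X 0 ^ 4 * X 1 ^ 2 + X 0 ^ 2 * X 1 ^ 4 - 3 * X 0 ^ 2 * X 1 ^ 2 * X 2 ^ 2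
      + X 2 ^ 6 + C (1 / 250 : ℝ) * (X 0 ^ 2 + X 1 ^ 2 + X 2 ^ 2) ^ 3
      : MvPolynomial (Fin 3) ℝ).IsHomogeneous 6 := by
    have h3 : (3 : MvPolynomial (Fin 3) ℝ) = C 3 := (map_ofNat C 3).symm
    have hx2 : ∀ i : Fin 3, ((X i ^ 2 : MvPolynomial (Fin 3) ℝ)).IsHomogeneous 2 :=
      fun i => by simpa using (isHomogeneous_X ℝ i).pow 2
    refine ((((?_ : IsHomogeneous _ 6).add ?_).sub ?_).add ?_).add ?_
    · simpa using ((isHomogeneous_X ℝ 0).pow 4).mul ((isHomogeneous_X ℝ 1).pow 2)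
    · simpa using ((isHomogeneous_X ℝ 0).pow 2).mul ((isHomogeneous_X ℝ 1).pow 4)
    · rw [h3]
      have : IsHomogeneous ((C 3 : MvPolynomial (Fin 3) ℝ) * X 0 ^2 * X 1^2 * X 2^2) (0+2+2+2) :=
        (((isHomogeneous_C _ _).mul (hx2 0)).mul (hx2 1)).mul (hx2 2)
      simpa using this
    · simpa using (isHomogeneous_X ℝ 2).pow 6
    · have : IsHomogeneous ((C (1/250 : ℝ) : MvPolynomial (Fin 3) ℝ) * (X 0 ^2 + X 1^2 + X 2^2)^3) (0+2*3) :=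
        (isHomogeneous_C (Fin 3) (1/250 : ℝ)).mul ((((hx2 0).add (hx2 1)).add (hx2 2)).pow 3)
      simpa using this
  refine ⟨_, rfl, hhom, ?_, ?_⟩
  · intro x hx

    have hx' : x 0 ≠ 0 ∨ x 1 ≠ 0 ∨ x 2 ≠ 0 := by
      by_contra h
      push_neg at h
      exact hx (funext fun i => by fin_cases i <;> simp [h.1, h.2.1, h.2.2])
    simp only [map_add, map_sub, map_mul, map_pow, eval_X, eval_C, map_ofNat]
    set a := x 0; set b := x 1; set c := x 2
    have hS : 0 < a^2 + b^2 + c^2 := by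
      rcases hx' with h | h | h <;> positivity
    have hM : 0 ≤ a^4*b^2 + a^2*b^4 - 3*a^2*b^2*c^2 + c^6 := by
      rcases eq_or_lt_of_le (by positivity : (0:ℝ) ≤ a^2 + b^2) with h | h
      · have ha2 : a^2 = 0 := by nlinarith [sq_nonneg a, sq_nonneg b]
        have hb2 : b^2 = 0 := by nlinarith [sq_nonneg a, sq_nonneg b]
        have ha : a = 0 := by
          have := sq_nonneg a; nlinarith
        have hb : b = 0 := by
          have := sq_nonneg b; nlinarith
        rw [ha, hb]; nlinarith [sq_nonneg (c^3)]
      · nlinarith [sq_nonneg (a*b*(a^2+b^2-2*c^2)), sq_nonneg (c*a*(b^2-c^2)),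
          sq_nonneg (c*b*(a^2-c^2))]
    have hP : 0 < (1/250 : ℝ) * (a^2+b^2+c^2)^3 := by positivity
    linarith
  · rintro ⟨m, q, hq⟩
    have hred := reduction hhom q hq
    set r : Fin m → MvPolynomial (Fin 3) ℝ := fun i => homogeneousComponent 3 (q i) with hr
    have hrhom : ∀ i, (r i).IsHomogeneous 3 := fun i => homogeneousComponent_isHomogeneous 3 (q i)
    have E1 : ∑ i, (eval ![(1:ℝ),0,0] (r i))^2 = 1/250 := by
      have hcomp := congrArg (eval ![(1:ℝ),0,0]) hred
      simp only [map_sum, map_pow] at hcomp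
      rw [← hcomp]
      simp only [map_add, map_sub, map_mul, map_pow, eval_X, eval_C, map_ofNat]
      norm_num [Matrix.cons_val_two, Matrix.tail_cons, Matrix.head_cons]
    have E2 : ∑ i, (eval ![(0:ℝ),1,0] (r i))^2 = 1/250 := by
      have hcomp := congrArg (eval ![(0:ℝ),1,0]) hred
      simp only [map_sum, map_pow] at hcomp
      rw [← hcomp]
      simp only [map_add, map_sub, map_mul, map_pow, eval_X, eval_C, map_ofNat]
      norm_num [Matrix.cons_val_two, Matrix.tail_cons, Matrix.head_cons]
    have E3 : ∑ i, (eval ![(0:ℝ),0,1] (r i))^2 = 251/250 := by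
      have hcomp := congrArg (eval ![(0:ℝ),0,1]) hred
      simp only [map_sum, map_pow] at hcomp
      rw [← hcomp]
      simp only [map_add, map_sub, map_mul, map_pow, eval_X, eval_C, map_ofNat]
      norm_num [Matrix.cons_val_two, Matrix.tail_cons, Matrix.head_cons]
    have E4 : ∑ i, (eval ![(1:ℝ),1,0] (r i))^2 = 254/125 := by
      have hcomp := congrArg (eval ![(1:ℝ),1,0]) hred
      simp only [map_sum, map_pow] at hcomp
      rw [← hcomp]
      simp only [map_add, map_sub, map_mul, map_pow, eval_X, eval_C, map_ofNat]
      norm_num [Matrix.cons_val_two, Matrix.tail_cons, Matrix.head_cons]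
    have E5 : ∑ i, (eval ![(1:ℝ),-1,0] (r i))^2 = 254/125 := by
      have hcomp := congrArg (eval ![(1:ℝ),-1,0]) hred
      simp only [map_sum, map_pow] at hcomp
      rw [← hcomp]
      simp only [map_add, map_sub, map_mul, map_pow, eval_X, eval_C, map_ofNat]
      norm_num [Matrix.cons_val_two, Matrix.tail_cons, Matrix.head_cons]
    have E6 : ∑ i, (eval ![(3:ℝ),0,2] (r i))^2 = 18197/250 := by
      have hcomp := congrArg (eval ![(3:ℝ),0,2]) hred
      simp only [map_sum, map_pow] at hcomp
      rw [← hcomp]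
      simp only [map_add, map_sub, map_mul, map_pow, eval_X, eval_C, map_ofNat]
      norm_num [Matrix.cons_val_two, Matrix.tail_cons, Matrix.head_cons]
    have E7 : ∑ i, (eval ![(3:ℝ),0,-2] (r i))^2 = 18197/250 := by
      have hcomp := congrArg (eval ![(3:ℝ),0,-2]) hred
      simp only [map_sum, map_pow] at hcomp
      rw [← hcomp]
      simp only [map_add, map_sub, map_mul, map_pow, eval_X, eval_C, map_ofNat]
      norm_num [Matrix.cons_val_two, Matrix.tail_cons, Matrix.head_cons]
    have E8 : ∑ i, (eval ![(0:ℝ),3,2] (r i))^2 = 18197/250 := by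
      have hcomp := congrArg (eval ![(0:ℝ),3,2]) hred
      simp only [map_sum, map_pow] at hcomp
      rw [← hcomp]
      simp only [map_add, map_sub, map_mul, map_pow, eval_X, eval_C, map_ofNat]
      norm_num [Matrix.cons_val_two, Matrix.tail_cons, Matrix.head_cons]
    have E9 : ∑ i, (eval ![(0:ℝ),3,-2] (r i))^2 = 18197/250 := by
      have hcomp := congrArg (eval ![(0:ℝ),3,-2]) hred
      simp only [map_sum, map_pow] at hcomp
      rw [← hcomp]
      simp only [map_add, map_sub, map_mul, map_pow, eval_X, eval_C, map_ofNat]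
      norm_num [Matrix.cons_val_two, Matrix.tail_cons, Matrix.head_cons]
    have E10 : ∑ i, (eval ![(3:ℝ),3,2] (r i))^2 = 74074/125 := by
      have hcomp := congrArg (eval ![(3:ℝ),3,2]) hred
      simp only [map_sum, map_pow] at hcomp
      rw [← hcomp]
      simp only [map_add, map_sub, map_mul, map_pow, eval_X, eval_C, map_ofNat]
      norm_num [Matrix.cons_val_two, Matrix.tail_cons, Matrix.head_cons]
    have E11 : ∑ i, (eval ![(3:ℝ),-3,2] (r i))^2 = 74074/125 := by
      have hcomp := congrArg (eval ![(3:ℝ),-3,2]) hred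
      simp only [map_sum, map_pow] at hcomp
      rw [← hcomp]
      simp only [map_add, map_sub, map_mul, map_pow, eval_X, eval_C, map_ofNat]
      norm_num [Matrix.cons_val_two, Matrix.tail_cons, Matrix.head_cons]
    have E12 : ∑ i, (eval ![(3:ℝ),3,-2] (r i))^2 = 74074/125 := by
      have hcomp := congrArg (eval ![(3:ℝ),3,-2]) hred
      simp only [map_sum, map_pow] at hcomp
      rw [← hcomp]
      simp only [map_add, map_sub, map_mul, map_pow, eval_X, eval_C, map_ofNat]
      norm_num [Matrix.cons_val_two, Matrix.tail_cons, Matrix.head_cons]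
    have E13 : ∑ i, (eval ![(3:ℝ),-3,-2] (r i))^2 = 74074/125 := by
      have hcomp := congrArg (eval ![(3:ℝ),-3,-2]) hred
      simp only [map_sum, map_pow] at hcomp
      rw [← hcomp]
      simp only [map_add, map_sub, map_mul, map_pow, eval_X, eval_C, map_ofNat]
      norm_num [Matrix.cons_val_two, Matrix.tail_cons, Matrix.head_cons]
    have key : ∀ i : Fin m, 0 ≤ (51/2 : ℝ) * (eval ![(1:ℝ),0,0] (r i))^2 + (51/2 : ℝ) * (eval ![(0:ℝ),1,0] (r i))^2 + (-8/81 : ℝ) * (eval ![(0:ℝ),0,1] (r i))^2 + (-17/24 : ℝ) * (eval ![(1:ℝ),1,0] (r i))^2 + (-17/24 : ℝ) * (eval ![(1:ℝ),-1,0] (r i))^2 + (1/324 : ℝ) * (eval ![(3:ℝ),0,2] (r i))^2 + (1/324 : ℝ) * (eval ![(3:ℝ),0,-2] (r i))^2 + (1/324 : ℝ) * (eval ![(0:ℝ),3,2] (r i))^2 + (1/324 : ℝ) * (eval ![(0:ℝ),3,-2] (r i))^2 + (1/1296 : ℝ) * (eval ![(3:ℝ),3,2] (r i))^2 + (1/1296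 : ℝ) * (eval ![(3:ℝ),-3,2] (r i))^2 + (1/1296 : ℝ) * (eval ![(3:ℝ),3,-2] (r i))^2 + (1/1296 : ℝ) * (eval ![(3:ℝ),-3,-2] (r i))^2 := by
      intro i
      obtain ⟨a,b,c,d,e,f,g,h,k,j,hrep⟩ := rep3 (r i) (hrhom i)
      rw [hrep]
      simp only [map_add, map_mul, map_pow, eval_X, eval_C]
      norm_num [Matrix.cons_val_zero, Matrix.cons_val_one, Matrix.head_cons, Matrix.cons_val_two, Matrix.tail_cons]
      nlinarith [sq_nonneg (a+e+6/5*h), sq_nonneg (15*a+h), sq_nonneg (b+d+6/5*k),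
        sq_nonneg (15*b+k), sq_nonneg (c+3/2*f+3/2*g), sq_nonneg (f-g), sq_nonneg j]
    have hsum : ∑ i : Fin m, ((51/2 : ℝ) * (eval ![(1:ℝ),0,0] (r i))^2 + (51/2 : ℝ) * (eval ![(0:ℝ),1,0] (r i))^2 + (-8/81 : ℝ) * (eval ![(0:ℝ),0,1] (r i))^2 + (-17/24 : ℝ) * (eval ![(1:ℝ),1,0] (r i))^2 + (-17/24 : ℝ) * (eval ![(1:ℝ),-1,0] (r i))^2 + (1/324 : ℝ) * (eval ![(3:ℝ),0,2] (r i))^2 + (1/324 : ℝ) * (eval ![(3:ℝ),0,-2] (r i))^2 + (1/324 : ℝ) * (eval ![(0:ℝ),3,2] (r i))^2 + (1/324 : ℝ) * (eval ![(0:ℝ),3,-2] (r i))^2 + (1/1296 : ℝ) * (eval ![(3:ℝ),3,2] (r i))^2 + (1/1296 : ℝ) * (eval ![(3:ℝ),-3,2] (r i))^2 + (1/1296 : ℝ) * (eval ![(3:ℝ),3,-2] (r i))^2 + (1/1296 : ℝ) * (eval ![(3:ℝ),-3,-2] (r i))^2) = -52/1125 := by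
      simp only [Finset.sum_add_distrib, ← Finset.mul_sum]
      rw [E1, E2, E3, E4, E5, E6, E7, E8, E9, E10, E11, E12, E13]
      norm_num
    have hfin : (0:ℝ) ≤ -52/1125 := hsum ▸ Finset.sum_nonneg (fun i _ => key i)
    norm_num at hfin
end

section
/- The Motzkin polynomial M(x₁,x₂) = x₁⁴x₂² + x₁²x₂⁴ − 3x₁²x₂² + 1 is not a sum of squares of polynomials. -/
open MvPolynomial

section Aux

open Polynomial

lemma sos_natDegree_le {m : ℕ} (p : Fin m → ℝ[X]) (r : ℝ[X])
    (h : ∑ i, p i ^ 2 = r) (i : Fin m) : 2 * (p i).natDegree ≤ r.natDegree := by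
  set d := Finset.univ.sup (fun j => (p j).natDegree) with hd
  have hle : ∀ j, (p j).natDegree ≤ d := fun j => Finset.le_sup (f := fun j => (p j).natDegree) (Finset.mem_univ j)
  rcases Nat.eq_zero_or_pos d with h0 | hpos
  · have := hle i; omega
  · have hc : r.coeff (2 * d) = ∑ j, ((p j).coeff d) ^ 2 := by
      rw [← h, Polynomial.finset_sum_coeff]
      apply Finset.sum_congr rfl
      intro j _
      rcases lt_or_eq_of_le (hle j) with hlt | heq
      · have h1 : ((p j) ^ 2).natDegree < 2 * d := by
          have := Polynomial.natDegree_pow_le (p := p j) (n := 2)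
          omega
        rw [Polynomial.coeff_eq_zero_of_natDegree_lt h1,
          Polynomial.coeff_eq_zero_of_natDegree_lt (by omega : (p j).natDegree < d)]
        ring
      · have h2 : ((p j) * (p j)).coeff ((p j).natDegree + (p j).natDegree)
            = (p j).leadingCoeff * (p j).leadingCoeff :=
          Polynomial.coeff_mul_degree_add_degree _ _
        rw [sq, show 2 * d = (p j).natDegree + (p j).natDegree from by omega, h2]
        simp [Polynomial.leadingCoeff, heq, sq]
    have hm : (Finset.univ : Finset (Fin m)).Nonempty := by
      by_contra hne
      rw [Finset.not_nonempty_iff_eq_empty] at hne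
      rw [hd, hne] at hpos; simp at hpos
    obtain ⟨j0, -, hj0⟩ := Finset.exists_mem_eq_sup Finset.univ hm
      (fun j => (p j).natDegree)
    have hpj0 : (p j0).natDegree = d := hj0.symm
    have hpne : p j0 ≠ 0 := by
      intro hz; rw [hz] at hpj0; simp at hpj0; omega
    have hne0 : (p j0).coeff d ≠ 0 := by
      rw [← hpj0]; exact Polynomial.leadingCoeff_ne_zero.mpr hpne
    have hsum : 0 < ∑ j, ((p j).coeff d) ^ 2 := by
      apply Finset.sum_pos' (fun j _ => sq_nonneg _)
      exact ⟨j0, Finset.mem_univ _, by positivity⟩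
    have : 2 * d ≤ r.natDegree :=
      Polynomial.le_natDegree_of_ne_zero (by rw [hc]; exact ne_of_gt hsum)
    have := hle i; omega

lemma coeff_one_diag (q : MvPolynomial (Fin 2) ℝ) :
    (MvPolynomial.aeval ![Polynomial.X, Polynomial.X] q).coeff 1
    = (MvPolynomial.aeval ![Polynomial.X, (0:ℝ[X])] q).coeff 1
    + (MvPolynomial.aeval ![(0:ℝ[X]), Polynomial.X] q).coeff 1 := by
  induction q using MvPolynomial.induction_on' with
  | add p q hp hq => simp [map_add, hp, hq]; ring
  | monomial d c =>
    rw [MvPolynomial.aeval_monomial, MvPolynomial.aeval_monomial, MvPolynomial.aeval_monomial]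
    rw [Finsupp.prod_fintype _ _ (fun i => pow_zero _),
        Finsupp.prod_fintype _ _ (fun i => pow_zero _),
        Finsupp.prod_fintype _ _ (fun i => pow_zero _)]
    simp only [Fin.prod_univ_two, Matrix.cons_val_zero, Matrix.cons_val_one, Matrix.head_cons]
    rcases Nat.eq_zero_or_pos (d 0) with h0 | h0 <;> rcases Nat.eq_zero_or_pos (d 1) with h1 | h1
    · simp [h0, h1]
    · simp [h0, zero_pow (by omega : d 1 ≠ 0)]
    · simp [h1, zero_pow (by omega : d 0 ≠ 0)]
    · rw [zero_pow (by omega : d 1 ≠ 0), zero_pow (by omega : d 0 ≠ 0)]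
      simp [← pow_add, Polynomial.coeff_C_mul, Polynomial.coeff_X_pow]
      intro h; omega

end Aux

/-- The Motzkin polynomial is not a sum of squares of polynomials. -/
theorem motzkin_not_sos :
    ¬ IsSOS (X 0 ^ 4 * X 1 ^ 2 + X 0 ^ 2 * X 1 ^ 4 - 3 * X 0 ^ 2 * X 1 ^ 2 + 1 :
      MvPolynomial (Fin 2) ℝ) := by
  rintro ⟨m, q, hq⟩
  set M : MvPolynomial (Fin 2) ℝ :=
    X 0 ^ 4 * X 1 ^ 2 + X 0 ^ 2 * X 1 ^ 4 - 3 * X 0 ^ 2 * X 1 ^ 2 + 1 with hM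
  -- substitution homs
  set φ0 : MvPolynomial (Fin 2) ℝ →ₐ[ℝ] Polynomial ℝ :=
    MvPolynomial.aeval ![Polynomial.X, (0:Polynomial ℝ)] with hφ0
  set φ1 : MvPolynomial (Fin 2) ℝ →ₐ[ℝ] Polynomial ℝ :=
    MvPolynomial.aeval ![(0:Polynomial ℝ), Polynomial.X] with hφ1
  set ψ : MvPolynomial (Fin 2) ℝ →ₐ[ℝ] Polynomial ℝ :=
    MvPolynomial.aeval ![Polynomial.X, Polynomial.X] with hψ
  have hφ0M : φ0 M = 1 := by
    simp [hM, hφ0]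
  have hφ1M : φ1 M = 1 := by
    simp [hM, hφ1]
  have hψM : ψ M = (Polynomial.X ^ 2 - 1) ^ 2 * (2 * Polynomial.X ^ 2 + 1) := by
    simp [hM, hψ]
    ring
  have hmap : ∀ (f : MvPolynomial (Fin 2) ℝ →ₐ[ℝ] Polynomial ℝ),
      f M = ∑ i, (f (q i)) ^ 2 := by
    intro f
    rw [hq, map_sum]
    simp [map_pow]
  -- linear coefficients of q i vanish under the axis substitutions
  have hc0 : ∀ i, (φ0 (q i)).coeff 1 = 0 := by
    intro i
    have hdeg := sos_natDegree_le (fun i => φ0 (q i)) 1 ((hmap φ0).symm.trans hφ0M) i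
    simp at hdeg
    exact Polynomial.coeff_eq_zero_of_natDegree_lt (by omega)
  have hc1 : ∀ i, (φ1 (q i)).coeff 1 = 0 := by
    intro i
    have hdeg := sos_natDegree_le (fun i => φ1 (q i)) 1 ((hmap φ1).symm.trans hφ1M) i
    simp at hdeg
    exact Polynomial.coeff_eq_zero_of_natDegree_lt (by omega)
  have hcd : ∀ i, (ψ (q i)).coeff 1 = 0 := by
    intro i
    have := coeff_one_diag (q i)
    rw [← hφ0, ← hφ1, ← hψ, hc0 i, hc1 i] at this
    simpa using this
  -- the diagonal restriction
  set A : Fin m → Polynomial ℝ := fun i => ψ (q i) with hA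
  have hAsum : ∑ i, (A i) ^ 2
      = (Polynomial.X ^ 2 - 1) ^ 2 * (2 * Polynomial.X ^ 2 + 1) :=
    (hmap ψ).symm.trans hψM
  -- roots at 1 and -1
  have hroot : ∀ (t : ℝ), ((Polynomial.X ^ 2 - 1) ^ 2
        * (2 * Polynomial.X ^ 2 + 1) : Polynomial ℝ).eval t = 0 →
      ∀ i, (A i).eval t = 0 := by
    intro t ht i
    have hsum0 : ∑ j, ((A j).eval t) ^ 2 = 0 := by
      have := congrArg (Polynomial.eval t) hAsum
      simpa [Polynomial.eval_finset_sum, ht] using this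
    have := (Finset.sum_eq_zero_iff_of_nonneg (fun j _ => sq_nonneg ((A j).eval t))).mp
      hsum0 i (Finset.mem_univ i)
    exact pow_eq_zero_iff (by norm_num) |>.mp this
  have hroot1 : ∀ i, (A i).eval 1 = 0 := hroot 1 (by norm_num)
  have hrootm1 : ∀ i, (A i).eval (-1) = 0 := hroot (-1) (by norm_num)
  -- divisibility by X^2 - 1
  have hdvd : ∀ i, ∃ u : Polynomial ℝ, A i = (Polynomial.X ^ 2 - 1) * u := by
    intro i
    obtain ⟨s, hs⟩ := (Polynomial.dvd_iff_isRoot.mpr (hroot1 i))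
    have hsm1 : s.eval (-1) = 0 := by
      have := hrootm1 i
      rw [hs] at this
      simp at this
      rcases this with h | h
      · norm_num at h
      · exact h
    obtain ⟨u, hu⟩ := (Polynomial.dvd_iff_isRoot.mpr hsm1)
    refine ⟨u, ?_⟩
    rw [hs, hu]
    simp only [map_neg, map_one]
    ring
  choose u hu using hdvd
  have husum : ∑ i, (u i) ^ 2 = 2 * Polynomial.X ^ 2 + 1 := by
    have hne : ((Polynomial.X ^ 2 - 1 : Polynomial ℝ)) ^ 2 ≠ 0 := by
      apply pow_ne_zero
      intro h
      have := congrArg (Polynomial.eval 0) h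
      simp at this
    apply mul_left_cancel₀ hne
    rw [← hAsum]
    rw [Finset.mul_sum]
    apply Finset.sum_congr rfl
    intro i _
    rw [hu i]
    ring
  -- each u i has degree ≤ 1
  have hudeg : ∀ i, (u i).natDegree ≤ 1 := by
    intro i
    have := sos_natDegree_le u _ husum i
    have h2 : (2 * Polynomial.X ^ 2 + 1 : Polynomial ℝ).natDegree = 2 := by
      compute_degree!
    omega
  choose a b hab using fun i => Polynomial.exists_eq_X_add_C_of_natDegree_le_one (hudeg i)
  -- from coeff 1 of A i = 0 deduce a i = 0
  have ha : ∀ i, a i = 0 := by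
    intro i
    have := hcd i
    rw [show ψ (q i) = A i from rfl, hu i, hab i] at this
    rw [show (Polynomial.X ^ 2 - 1) * (Polynomial.C (a i) * Polynomial.X + Polynomial.C (b i))
        = Polynomial.C (a i) * Polynomial.X ^ 3 + Polynomial.C (b i) * Polynomial.X ^ 2
          - Polynomial.C (a i) * Polynomial.X - Polynomial.C (b i) from by ring] at this
    simpa using this
  -- contradiction via coefficient of X^2
  have : (∑ i, (u i) ^ 2).coeff 2 = (2:ℝ) := by
    rw [husum]; simp [Polynomial.coeff_one]
  rw [Polynomial.finset_sum_coeff] at this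
  have hzero : ∀ i ∈ Finset.univ, ((u i) ^ 2).coeff 2 = 0 := by
    intro i _
    rw [hab i, ha i]
    simp only [map_zero, zero_mul, zero_add, ← map_pow]
    rw [Polynomial.coeff_C]
    norm_num
  rw [Finset.sum_congr rfl hzero, Finset.sum_const_zero] at this
  norm_num at this
end

section
/- If a polynomial p in n variables of degree d is a sum of squares, then its top homogeneous component (the sum of its degree-d monomials) is also a sum of squares. -/
open MvPolynomial

private lemma hc_top_ne_zero {n : ℕ} (p : MvPolynomial (Fin n) ℝ) (hp : p ≠ 0) :
    homogeneousComponent p.totalDegree p ≠ 0 := by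
  obtain ⟨d, hd, hdeg⟩ := p.support.exists_mem_eq_sup
    (Finset.nonempty_iff_ne_empty.mpr (MvPolynomial.support_eq_empty.not.mpr hp)) (fun s => s.sum fun _ e => e)
  intro h0
  have hc := coeff_homogeneousComponent p.totalDegree p d
  rw [h0] at hc
  have hdd : d.degree = p.totalDegree := by
    rw [Finsupp.degree, totalDegree, hdeg, Finsupp.sum]
    rfl
  rw [if_pos hdd] at hc
  exact (MvPolynomial.mem_support_iff.mp hd) hc.symm

private lemma hc_sq_s14 {n : ℕ} (m : ℕ) (q : MvPolynomial (Fin n) ℝ) (hq : q.totalDegree ≤ m) :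
    homogeneousComponent (2 * m) (q ^ 2) = (homogeneousComponent m q) ^ 2 := by
  set h₁ := homogeneousComponent m q with hh₁
  set r := q - h₁ with hr
  have hmem := homogeneousComponent_mem m q
  have hhom : h₁.IsHomogeneous m := homogeneousComponent_isHomogeneous m q
  have hcr : homogeneousComponent m r = 0 := by
    rw [hr, map_sub, homogeneousComponent_of_mem hmem, if_pos rfl, sub_self]
  have hq2 : q ^ 2 = h₁ ^ 2 + (h₁ * r + r * h₁ + r ^ 2) := by
    have : q = h₁ + r := by rw [hr]; ring
    rw [this]; ring
  have hch : homogeneousComponent (2 * m) (h₁ ^ 2) = h₁ ^ 2 := by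
    have h2m : (h₁ ^ 2).IsHomogeneous (2 * m) := by
      rw [sq, two_mul]
      exact hhom.mul hhom
    rw [homogeneousComponent_of_mem ((mem_homogeneousSubmodule _ _).mpr h2m), if_pos rfl]
  by_cases hr0 : r = 0
  · rw [hq2, hr0, map_add, hch]
    simp
  · -- r ≠ 0, show totalDegree r < m
    have hrle : r.totalDegree ≤ m := by
      rw [hr]
      refine le_trans (totalDegree_sub _ _) (max_le hq hhom.totalDegree_le)
    have hrlt : r.totalDegree < m := by
      rcases lt_or_eq_of_le hrle with h | h
      · exact h
      · exfalso
        have := hc_top_ne_zero r hr0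
        rw [h] at this
        exact this hcr
    have hm1 : 1 ≤ m := Nat.one_le_iff_ne_zero.mpr (by omega)
    have hrest : (h₁ * r + r * h₁ + r ^ 2).totalDegree < 2 * m := by
      have h1 : (h₁ * r).totalDegree < 2 * m := by
        calc (h₁ * r).totalDegree ≤ h₁.totalDegree + r.totalDegree := totalDegree_mul _ _
        _ < 2 * m := by have := hhom.totalDegree_le; omega
      have h2 : (r * h₁).totalDegree < 2 * m := by
        calc (r * h₁).totalDegree ≤ r.totalDegree + h₁.totalDegree := totalDegree_mul _ _
        _ < 2 * m := by have := hhom.totalDegree_le; omega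
      have h3 : (r ^ 2).totalDegree < 2 * m := by
        calc (r ^ 2).totalDegree ≤ 2 * r.totalDegree := totalDegree_pow _ _
        _ < 2 * m := by omega
      calc (h₁ * r + r * h₁ + r ^ 2).totalDegree
          ≤ max (h₁ * r + r * h₁).totalDegree (r ^ 2).totalDegree := totalDegree_add _ _
        _ ≤ max (max (h₁ * r).totalDegree (r * h₁).totalDegree) (r ^ 2).totalDegree := by
            exact max_le_max (totalDegree_add _ _) le_rfl
        _ < 2 * m := by omega
    rw [hq2, map_add, hch, homogeneousComponent_eq_zero _ _ hrest, add_zero]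

private lemma sos_ne_zero {n k : ℕ} (q : Fin k → MvPolynomial (Fin n) ℝ) (i : Fin k)
    (hi : q i ≠ 0) : (∑ j, (q j) ^ 2) ≠ 0 := by
  have : ∃ x : Fin n → ℝ, eval x (q i) ≠ 0 := by
    by_contra hx
    push_neg at hx
    exact hi (MvPolynomial.funext fun x => by simpa using hx x)
  obtain ⟨x, hx⟩ := this
  intro h0
  have : eval x (∑ j, (q j) ^ 2) = ∑ j, (eval x (q j)) ^ 2 := by
    simp [map_sum]
  rw [h0] at this
  have hpos : 0 < (eval x (q i)) ^ 2 := by positivity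
  have hle : (eval x (q i)) ^ 2 ≤ ∑ j, (eval x (q j)) ^ 2 :=
    Finset.single_le_sum (f := fun j => (eval x (q j)) ^ 2) (fun j _ => sq_nonneg _)
      (Finset.mem_univ i)
  simp at this
  rw [← this] at hle
  linarith

/-- If a polynomial of degree `d` is a sum of squares, then its top homogeneous component
(the sum of its degree-`d` monomials) is also a sum of squares. -/
theorem thc_of_sos (n d : ℕ) (p : MvPolynomial (Fin n) ℝ)
    (hd : p.totalDegree = d) (h : IsSOS p) :
    IsSOS (homogeneousComponent d p) := by
  obtain ⟨k, q, rfl⟩ := h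
  by_cases hz : ∀ i, q i = 0
  · have hp0 : (∑ i, (q i) ^ 2) = 0 := Finset.sum_eq_zero fun i _ => by rw [hz i]; ring
    rw [hp0, map_zero]
    exact ⟨0, Fin.elim0, by simp⟩
  · push_neg at hz
    obtain ⟨i₀, hi₀⟩ := hz
    set m := Finset.univ.sup fun i => (q i).totalDegree with hm
    have hle : ∀ i, (q i).totalDegree ≤ m := fun i => Finset.le_sup (f := fun i => (q i).totalDegree) (Finset.mem_univ i)
    have hS : homogeneousComponent (2 * m) (∑ i, (q i) ^ 2)
        = ∑ i, (homogeneousComponent m (q i)) ^ 2 := by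
      rw [map_sum]
      exact Finset.sum_congr rfl fun i _ => hc_sq_s14 m (q i) (hle i)
    -- find j with totalDegree (q j) = m and q j ≠ 0
    have hj : ∃ j, (q j).totalDegree = m ∧ q j ≠ 0 := by
      obtain ⟨j, -, hjs⟩ := Finset.exists_mem_eq_sup Finset.univ
        ⟨i₀, Finset.mem_univ i₀⟩ (fun i => (q i).totalDegree)
      by_cases h0 : q j = 0
      · have hm0 : m = 0 := by rw [hm, hjs, h0, totalDegree_zero]
        refine ⟨i₀, ?_, hi₀⟩
        have := hle i₀
        omega
      · exact ⟨j, hjs.symm, h0⟩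
    obtain ⟨j, hjm, hjne⟩ := hj
    have hhcne : homogeneousComponent m (q j) ≠ 0 := by
      rw [← hjm]; exact hc_top_ne_zero _ hjne
    have hSne : (∑ i, (homogeneousComponent m (q i)) ^ 2) ≠ 0 :=
      sos_ne_zero _ j hhcne
    have hd2 : (∑ i, (q i) ^ 2).totalDegree = 2 * m := by
      refine le_antisymm ?_ ?_
      · refine totalDegree_finsetSum_le fun i _ => ?_
        calc ((q i) ^ 2).totalDegree ≤ 2 * (q i).totalDegree := totalDegree_pow _ _
          _ ≤ 2 * m := by have := hle i; omega
      · by_contra hlt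
        push_neg at hlt
        exact hSne (hS ▸ homogeneousComponent_eq_zero _ _ hlt)
    have : d = 2 * m := by omega
    subst this
    exact ⟨k, fun i => homogeneousComponent m (q i), by rw [← hS]⟩
end

section
/- If p is a polynomial whose top homogeneous component is positive definite, then p is radially unbounded, i.e., p(x) → ∞ as ‖x‖ → ∞. -/
open MvPolynomial


lemma eval_smul_hom {σ : Type*} [Fintype σ] {m : ℕ} {φ : MvPolynomial σ ℝ}
    (hφ : φ.IsHomogeneous m) (c : ℝ) (x : σ → ℝ) :
    eval (c • x) φ = c ^ m * eval x φ := by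
  rw [eval_eq', eval_eq', Finset.mul_sum]
  refine Finset.sum_congr rfl fun e he => ?_
  have hdeg : (Finsupp.weight 1 e : ℕ) = m := hφ (mem_support_iff.mp he)
  have hsum : ∑ i, e i = m := by
    rw [← hdeg, Finsupp.weight_apply, Finsupp.sum]
    simp only [smul_eq_mul, mul_one, Pi.one_apply]
    exact (Finset.sum_subset (Finset.subset_univ _)
      (fun i _ hi => Finsupp.notMem_support_iff.mp hi)).symm
  calc coeff e φ * ∏ i, (c • x) i ^ e i
      = coeff e φ * ((∏ i, c ^ e i) * ∏ i, x i ^ e i) := by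
        simp [mul_pow, Finset.prod_mul_distrib]
    _ = c ^ m * (coeff e φ * ∏ i, x i ^ e i) := by
        rw [Finset.prod_pow_eq_pow_sum, hsum]; ring

/-- If the top homogeneous component of a polynomial `p` is positive definite, then `p`
is radially unbounded: `p(x) → ∞` as `‖x‖ → ∞`. -/
theorem radially_unbounded_of_thc_posdef (n : ℕ) (p : MvPolynomial (Fin n) ℝ)
    (h0 : eval (0 : Fin n → ℝ) (homogeneousComponent p.totalDegree p) = 0)
    (hpos : ∀ x : Fin n → ℝ, x ≠ 0 →
      0 < eval x (homogeneousComponent p.totalDegree p)) :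
    ∀ M : ℝ, ∃ R : ℝ, ∀ x : Fin n → ℝ, R < ‖x‖ → M < eval x p := by
  intro M
  rcases Nat.eq_zero_or_pos n with hn | hn
  · subst hn
    refine ⟨0, fun x hx => absurd hx ?_⟩
    have hx0 : x = 0 := Subsingleton.elim _ _
    simp [hx0]
  have : Nontrivial (Fin n → ℝ) := by
    have : Nonempty (Fin n) := ⟨⟨0, hn⟩⟩
    infer_instance
  set d := p.totalDegree with hd
  set q := homogeneousComponent d p with hqdef
  have hqhom : q.IsHomogeneous d := homogeneousComponent_isHomogeneous d p
  obtain ⟨y, hy⟩ := exists_ne (0 : Fin n → ℝ)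
  have hdpos : 0 < d := by
    rcases Nat.eq_zero_or_pos d with h | h
    · exfalso
      have h1 : q = C (coeff 0 p) := by rw [hqdef, h, homogeneousComponent_zero]
      have h2 := hpos y hy
      rw [h1] at h2 h0
      simp at h0 h2
      exact absurd h0 (ne_of_gt h2)
    · exact h
  -- min of q on sphere
  have hsph : (Metric.sphere (0 : Fin n → ℝ) 1).Nonempty :=
    NormedSpace.sphere_nonempty.mpr zero_le_one
  have hcomp : IsCompact (Metric.sphere (0 : Fin n → ℝ) 1) := isCompact_sphere 0 1
  obtain ⟨z, hz, hzmin⟩ := hcomp.exists_isMinOn hsph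
    (MvPolynomial.continuous_eval q).continuousOn
  have hznorm : ‖z‖ = 1 := by simpa using mem_sphere_iff_norm.mp hz
  have hzne : z ≠ 0 := by intro h; rw [h, norm_zero] at hznorm; norm_num at hznorm
  set ε : ℝ := eval z q with hεdef
  have hεpos : 0 < ε := hpos z hzne
  -- lower bound for q
  have hqlb : ∀ x : Fin n → ℝ, x ≠ 0 → ε * ‖x‖ ^ d ≤ eval x q := by
    intro x hx
    have hxn : (0:ℝ) < ‖x‖ := norm_pos_iff.mpr hx
    set u : Fin n → ℝ := ‖x‖⁻¹ • x with hu
    have hun : u ∈ Metric.sphere (0 : Fin n → ℝ) 1 := by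
      simp [hu, norm_smul, abs_of_pos (inv_pos.mpr hxn), inv_mul_cancel₀ hxn.ne']
    have hxu : x = ‖x‖ • u := by
      rw [hu, smul_smul, mul_inv_cancel₀ hxn.ne', one_smul]
    have := hzmin hun
    have h1 : eval x q = ‖x‖ ^ d * eval u q := by
      conv_lhs => rw [hxu]
      exact eval_smul_hom hqhom _ _
    rw [h1]
    have : ε ≤ eval u q := hzmin hun
    nlinarith [pow_pos hxn d]
  -- bounds for lower components
  have hbnd : ∀ i : ℕ, ∃ C : ℝ, 0 ≤ C ∧ ∀ x : Fin n → ℝ, 1 ≤ ‖x‖ →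
      |eval x (homogeneousComponent i p)| ≤ C * ‖x‖ ^ i := by
    intro i
    obtain ⟨w, hw, hwmax⟩ := hcomp.exists_isMaxOn hsph
      ((MvPolynomial.continuous_eval (homogeneousComponent i p)).abs.continuousOn)
    refine ⟨|eval w (homogeneousComponent i p)|, abs_nonneg _, fun x hx => ?_⟩
    have hxn : (0:ℝ) < ‖x‖ := lt_of_lt_of_le one_pos hx
    set u : Fin n → ℝ := ‖x‖⁻¹ • x with hu
    have hun : u ∈ Metric.sphere (0 : Fin n → ℝ) 1 := by
      simp [hu, norm_smul, abs_of_pos (inv_pos.mpr hxn), inv_mul_cancel₀ hxn.ne']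
    have hxu : x = ‖x‖ • u := by
      rw [hu, smul_smul, mul_inv_cancel₀ hxn.ne', one_smul]
    have h1 : eval x (homogeneousComponent i p) = ‖x‖ ^ i * eval u (homogeneousComponent i p) := by
      conv_lhs => rw [hxu]
      exact eval_smul_hom (homogeneousComponent_isHomogeneous i p) _ _
    rw [h1, abs_mul, abs_of_pos (pow_pos hxn i), mul_comm]
    exact mul_le_mul_of_nonneg_right (hwmax hun) (le_of_lt (pow_pos hxn i))
  choose C hC0 hC using hbnd
  set Ctot : ℝ := ∑ i ∈ Finset.range d, C i with hCt
  have hCtot0 : 0 ≤ Ctot := Finset.sum_nonneg fun i _ => hC0 i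
  refine ⟨max 1 ((Ctot + max M 0 + 1) / ε), fun x hx => ?_⟩
  have hx1 : 1 < ‖x‖ := lt_of_le_of_lt (le_max_left _ _) hx
  have hxn : (0:ℝ) < ‖x‖ := lt_trans one_pos hx1
  have hxne : x ≠ 0 := fun h => by rw [h, norm_zero] at hxn; exact lt_irrefl _ hxn
  have hεx : Ctot + max M 0 + 1 < ε * ‖x‖ := by
    have := lt_of_le_of_lt (le_max_right 1 ((Ctot + max M 0 + 1) / ε)) hx
    rw [div_lt_iff₀ hεpos] at this
    linarith [this]
  -- decompose p
  have hdecomp : eval x p = eval x q + ∑ i ∈ Finset.range d, eval x (homogeneousComponent i p) := by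
    conv_lhs => rw [← sum_homogeneousComponent p, Finset.sum_range_succ]
    rw [map_add, map_sum]
    exact add_comm _ _
  have hrem : |∑ i ∈ Finset.range d, eval x (homogeneousComponent i p)| ≤ Ctot * ‖x‖ ^ (d-1) := by
    calc |∑ i ∈ Finset.range d, eval x (homogeneousComponent i p)|
        ≤ ∑ i ∈ Finset.range d, |eval x (homogeneousComponent i p)| :=
          Finset.abs_sum_le_sum_abs _ _
      _ ≤ ∑ i ∈ Finset.range d, C i * ‖x‖ ^ (d-1) := by
          refine Finset.sum_le_sum fun i hi => ?_
          refine le_trans (hC i x hx1.le) ?_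
          refine mul_le_mul_of_nonneg_left ?_ (hC0 i)
          exact pow_le_pow_right₀ hx1.le (Nat.le_sub_one_of_lt (Finset.mem_range.mp hi))
      _ = Ctot * ‖x‖ ^ (d-1) := by rw [← Finset.sum_mul]
  have hpowd : ‖x‖ ^ d = ‖x‖ ^ (d - 1) * ‖x‖ := by
    rw [← pow_succ, Nat.sub_add_cancel hdpos]
  have hqx := hqlb x hxne
  have hp1 : (0:ℝ) < ‖x‖ ^ (d-1) := pow_pos hxn _
  have hp1' : (1:ℝ) ≤ ‖x‖ ^ (d-1) := one_le_pow₀ hx1.le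
  have habs := abs_le.mp hrem
  have hM : M ≤ max M 0 := le_max_left _ _
  rw [hdecomp]
  have key : ‖x‖ ^ (d-1) * (ε * ‖x‖ - Ctot) ≤ eval x q + ∑ i ∈ Finset.range d, eval x (homogeneousComponent i p) := by
    have : ε * ‖x‖ ^ d = ‖x‖ ^ (d-1) * (ε * ‖x‖) := by rw [hpowd]; ring
    nlinarith [habs.1]
  have key2 : max M 0 + 1 ≤ ‖x‖ ^ (d-1) * (ε * ‖x‖ - Ctot) := by
    have h1 : max M 0 + 1 ≤ ε * ‖x‖ - Ctot := by linarith
    have hM0 : (0:ℝ) ≤ max M 0 := le_max_right _ _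
    have h2 : (0:ℝ) ≤ ε * ‖x‖ - Ctot := by linarith
    calc max M 0 + 1 ≤ ε * ‖x‖ - Ctot := h1
      _ = 1 * (ε * ‖x‖ - Ctot) := (one_mul _).symm
      _ ≤ ‖x‖ ^ (d-1) * (ε * ‖x‖ - Ctot) := mul_le_mul_of_nonneg_right hp1' h2
  linarith
end

section
/- If a polynomial p is radially unbounded, then its top homogeneous component is positive semidefinite (nonnegative everywhere). -/
open MvPolynomial Filter

lemma eval_smul_of_isHomogeneous {n m : ℕ} {q : MvPolynomial (Fin n) ℝ}
    (hq : q.IsHomogeneous m) (t : ℝ) (x : Fin n → ℝ) :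
    eval (t • x) q = t ^ m * eval x q := by
  rw [eval_eq, eval_eq, Finset.mul_sum]
  apply Finset.sum_congr rfl
  intro d hd
  have hdm : ∑ i ∈ d.support, d i = m := by
    have := hq (mem_support_iff.mp hd)
    simpa [Finsupp.weight_apply, Finsupp.sum] using this
  simp_rw [Pi.smul_apply, smul_eq_mul, mul_pow, Finset.prod_mul_distrib,
    Finset.prod_pow_eq_pow_sum, hdm]
  ring

/-- If a polynomial `p` on ℝⁿ (n ≥ 1) is radially unbounded, then its top homogeneous
component is positive semidefinite, i.e. nonnegative everywhere. -/
theorem thc_nonneg_of_radially_unbounded (n : ℕ) (hn : 0 < n)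
    (p : MvPolynomial (Fin n) ℝ)
    (hrad : ∀ M : ℝ, ∃ R : ℝ, ∀ x : Fin n → ℝ, R < ‖x‖ → M < eval x p) :
    ∀ x : Fin n → ℝ, 0 ≤ eval x (homogeneousComponent p.totalDegree p) := by
  haveI : Nonempty (Fin n) := ⟨⟨0, hn⟩⟩
  intro x
  by_contra hneg
  push_neg at hneg
  set d := p.totalDegree with hdd
  by_cases hd0 : d = 0
  · -- p is homogeneous of degree 0, hence constant; contradicts radial unboundedness
    have hp0 : p.IsHomogeneous 0 := (totalDegree_zero_iff_isHomogeneous (σ := Fin n)).mp hd0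
    have hconst : ∀ y : Fin n → ℝ, eval y p = eval 0 p := by
      intro y
      have := eval_smul_of_isHomogeneous hp0 0 y
      simpa using this.symm
    obtain ⟨R, hR⟩ := hrad (eval 0 p)
    have hy : R < ‖(fun _ : Fin n => |R| + 1 : Fin n → ℝ)‖ := by
      rw [pi_norm_const, Real.norm_eq_abs,
        abs_of_nonneg (by positivity : (0:ℝ) ≤ |R| + 1)]
      have := le_abs_self R
      linarith
    have h2 := hR _ hy
    rw [hconst (fun _ : Fin n => |R| + 1)] at h2
    exact lt_irrefl _ h2
  · have hd : 0 < d := Nat.pos_of_ne_zero hd0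
    -- the coefficients of t ↦ p (t • x)
    set c : ℕ → ℝ := fun i => eval x (homogeneousComponent i p) with hc
    have hcd : c d < 0 := hneg
    set P : Polynomial ℝ := ∑ i ∈ Finset.range (d + 1), Polynomial.C (c i) * Polynomial.X ^ i
      with hP
    have hkey : ∀ t : ℝ, eval (t • x) p = P.eval t := by
      intro t
      conv_lhs => rw [← p.sum_homogeneousComponent]
      rw [map_sum, hP, Polynomial.eval_finset_sum]
      apply Finset.sum_congr rfl
      intro i _
      rw [eval_smul_of_isHomogeneous (homogeneousComponent_isHomogeneous i p) t x,
        Polynomial.eval_mul, Polynomial.eval_C, Polynomial.eval_pow, Polynomial.eval_X]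
      ring
    -- coefficient of P at d is c d
    have hPcoeff : P.coeff d = c d := by
      rw [hP, Polynomial.finset_sum_coeff]
      simp only [Polynomial.coeff_C_mul, Polynomial.coeff_X_pow]
      rw [Finset.sum_eq_single d]
      · simp
      · intro b _ hb; simp [Ne.symm hb]
      · intro h; exact absurd (Finset.self_mem_range_succ d) h
    have hPne : P ≠ 0 := fun h => by
      rw [h, Polynomial.coeff_zero] at hPcoeff
      exact absurd hPcoeff.symm (ne_of_lt hcd)
    have hdegle : P.natDegree ≤ d := by
      apply Polynomial.natDegree_sum_le_of_forall_le
      intro i hi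
      refine le_trans (Polynomial.natDegree_C_mul_le _ _) ?_
      simpa using Nat.lt_succ_iff.mp (Finset.mem_range.mp hi)
    have hdegge : d ≤ P.natDegree :=
      Polynomial.le_natDegree_of_ne_zero (hPcoeff ▸ ne_of_lt hcd)
    have hnatdeg : P.natDegree = d := le_antisymm hdegle hdegge
    have hlead : P.leadingCoeff ≤ 0 := by
      rw [Polynomial.leadingCoeff, hnatdeg, hPcoeff]
      exact le_of_lt hcd
    have hdegpos : 0 < P.degree := by
      rw [Polynomial.degree_eq_natDegree hPne, hnatdeg]
      exact_mod_cast hd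
    have hbot : Tendsto (fun t : ℝ => P.eval t) atTop atBot :=
      P.tendsto_atBot_of_leadingCoeff_nonpos hdegpos hlead
    -- x ≠ 0
    have hx0 : x ≠ 0 := by
      intro h
      have : eval x (homogeneousComponent d p) = 0 := by
        rw [h, eval_zero, constantCoeff_eq]
        rw [coeff_homogeneousComponent]
        rw [if_neg]
        simpa using Ne.symm hd0
      rw [this] at hneg
      exact lt_irrefl _ hneg
    have hxnorm : 0 < ‖x‖ := norm_pos_iff.mpr hx0
    obtain ⟨R, hR⟩ := hrad 0
    have h1 : ∀ᶠ t : ℝ in atTop, P.eval t < 0 := hbot.eventually (eventually_lt_atBot 0)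
    have h2 : ∀ᶠ t : ℝ in atTop, R < ‖t • x‖ := by
      have htend : Tendsto (fun t : ℝ => t * ‖x‖) atTop atTop :=
        Tendsto.atTop_mul_const hxnorm tendsto_id
      filter_upwards [htend.eventually (eventually_gt_atTop R), eventually_ge_atTop (0:ℝ)]
        with t ht ht0
      rw [norm_smul, Real.norm_eq_abs, abs_of_nonneg ht0]
      exact ht
    obtain ⟨t, ht1, ht2⟩ := (h1.and h2).exists
    have := hR (t • x) ht2
    rw [hkey t] at this
    linarith
end
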